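/- Let n ≥ 1 and let F_{3n} be the free group on the 3n generators x_1, y_1, z_1, …, x_n, y_n, z_n. Let A_n = ⋃_{i=1}^{n} {x_i, y_i^{-1}, y_i^{-1} x_i^{-1} y_i^{-1}, x_i z_i, y_i^{-1} z_i}. Then |A_n A_n^{-1}| - |A_n^{-1} A_n| = 2n. -/

import Mathlib

open scoped Pointwise

open FreeGroup Finset

namespace Stmt5Aux

def S : Finset (FreeGroup (Fin 3)) :=
  {of 0, (of 1)⁻¹, (of 1)⁻¹ * (of 0)⁻¹ * (of 1)⁻¹, of 0 * of 2, (of 1)⁻¹ * of 2}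

def ι (n : ℕ) (i : Fin n) : FreeGroup (Fin 3) →* FreeGroup (Fin n × Fin 3) :=
  FreeGroup.map (fun ℓ => (i, ℓ))

def ψ (n : ℕ) (i : Fin n) : FreeGroup (Fin n × Fin 3) →* FreeGroup (Fin 3) :=
  FreeGroup.lift (fun p => if p.1 = i then FreeGroup.of p.2 else 1)

variable {n : ℕ}

lemma psi_iota_self (i : Fin n) (u : FreeGroup (Fin 3)) : ψ n i (ι n i u) = u := by
  have h : (ψ n i).comp (ι n i) = MonoidHom.id _ := by
    apply FreeGroup.ext_hom; intro a
    simp [ψ, ι, FreeGroup.map.of, FreeGroup.lift_apply_of]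
  have := DFunLike.congr_fun h u
  simpa using this

lemma psi_iota_ne {i j : Fin n} (h : j ≠ i) (u : FreeGroup (Fin 3)) :
    ψ n i (ι n j u) = 1 := by
  have h2 : (ψ n i).comp (ι n j) = 1 := by
    apply FreeGroup.ext_hom; intro a
    simp [ψ, ι, FreeGroup.map.of, FreeGroup.lift_apply_of, h]
  have := DFunLike.congr_fun h2 u
  simpa using this

lemma iota_inj (i : Fin n) : Function.Injective (ι n i) := by
  intro u v h
  have := congrArg (ψ n i) h
  simpa [psi_iota_self] using this

lemma psi_mul (m i j : Fin n) (u v : FreeGroup (Fin 3)) :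
    ψ n m (ι n i u * ι n j v)
      = (if i = m then u else 1) * (if j = m then v else 1) := by
  rw [_root_.map_mul]
  congr 1 <;> split_ifs with h <;>
    simp [h, psi_iota_self, psi_iota_ne]

lemma card_prod (hn : 0 < n) (U V : Finset (FreeGroup (Fin 3)))
    (h1U : (1 : FreeGroup (Fin 3)) ∉ U) (h1V : (1 : FreeGroup (Fin 3)) ∉ V)
    (hd : Disjoint U V) (h1UV : (1 : FreeGroup (Fin 3)) ∈ U * V) :
    ((univ.biUnion fun i : Fin n => U.image (ι n i)) *
      (univ.biUnion fun i : Fin n => V.image (ι n i))).card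
    = 1 + n * ((U * V).card - 1) + n * (n - 1) * (U.card * V.card) := by
  classical
  set T : Finset (FreeGroup (Fin 3)) := (U * V).erase 1 with hT
  set D : Finset (FreeGroup (Fin n × Fin 3)) :=
    univ.biUnion fun i : Fin n => T.image (ι n i) with hD
  set O : Finset (FreeGroup (Fin n × Fin 3)) :=
    (univ : Finset (Fin n)).offDiag.biUnion
      fun p => (U.image (ι n p.1)) * (V.image (ι n p.2)) with hO
  have hneU : ∀ {u}, u ∈ U → u ≠ 1 := fun hu => ne_of_mem_of_not_mem hu h1U
  have hneV : ∀ {v}, v ∈ V → v ≠ 1 := fun hv => ne_of_mem_of_not_mem hv h1V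
  -- step 1 : set equality
  have hEq : (univ.biUnion fun i : Fin n => U.image (ι n i)) *
      (univ.biUnion fun i : Fin n => V.image (ι n i)) = ({1} ∪ D) ∪ O := by
    ext w
    constructor
    · intro hw
      obtain ⟨a, ha, b, hb, hab⟩ := Finset.mem_mul.1 hw
      obtain ⟨i, -, ha2⟩ := Finset.mem_biUnion.1 ha
      obtain ⟨u, hu, rfl⟩ := Finset.mem_image.1 ha2
      obtain ⟨j, -, hb2⟩ := Finset.mem_biUnion.1 hb
      obtain ⟨v, hv, rfl⟩ := Finset.mem_image.1 hb2
      by_cases hij : i = j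
      · subst hij
        by_cases huv : u * v = 1
        · simp [← hab, ← _root_.map_mul, huv]
        · refine Finset.mem_union_left _ (Finset.mem_union_right _ ?_)
          rw [hD]
          refine Finset.mem_biUnion.2 ⟨i, Finset.mem_univ _, ?_⟩
          exact Finset.mem_image.2 ⟨u * v, Finset.mem_erase.2 ⟨huv,
            Finset.mul_mem_mul hu hv⟩, by rw [_root_.map_mul, hab]⟩
      · refine Finset.mem_union_right _ ?_
        rw [hO]
        refine Finset.mem_biUnion.2 ⟨(i, j), Finset.mem_offDiag.2
          ⟨Finset.mem_univ _, Finset.mem_univ _, hij⟩, ?_⟩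
        exact Finset.mem_mul.2 ⟨_, Finset.mem_image_of_mem _ hu, _,
          Finset.mem_image_of_mem _ hv, hab⟩
    · intro hw
      rcases Finset.mem_union.1 hw with hw | hw
      · rcases Finset.mem_union.1 hw with hw | hw
        · have hw1 : w = 1 := by simpa using hw
          obtain ⟨u, hu, v, hv, huv⟩ := Finset.mem_mul.1 h1UV
          refine Finset.mem_mul.2 ⟨ι n ⟨0, hn⟩ u, ?_, ι n ⟨0, hn⟩ v, ?_, ?_⟩
          · exact Finset.mem_biUnion.2 ⟨⟨0, hn⟩, Finset.mem_univ _,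
              Finset.mem_image_of_mem _ hu⟩
          · exact Finset.mem_biUnion.2 ⟨⟨0, hn⟩, Finset.mem_univ _,
              Finset.mem_image_of_mem _ hv⟩
          · rw [← _root_.map_mul, huv, _root_.map_one, hw1]
        · rw [hD] at hw
          obtain ⟨i, -, hw2⟩ := Finset.mem_biUnion.1 hw
          obtain ⟨c, hc, rfl⟩ := Finset.mem_image.1 hw2
          obtain ⟨u, hu, v, hv, huv⟩ :=
            Finset.mem_mul.1 (Finset.mem_of_mem_erase hc)
          refine Finset.mem_mul.2 ⟨ι n i u, ?_, ι n i v, ?_, ?_⟩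
          · exact Finset.mem_biUnion.2 ⟨i, Finset.mem_univ _,
              Finset.mem_image_of_mem _ hu⟩
          · exact Finset.mem_biUnion.2 ⟨i, Finset.mem_univ _,
              Finset.mem_image_of_mem _ hv⟩
          · rw [← _root_.map_mul, huv]
      · rw [hO] at hw
        obtain ⟨p, hp, hwp⟩ := Finset.mem_biUnion.1 hw
        obtain ⟨a, ha, b, hb, hab⟩ := Finset.mem_mul.1 hwp
        obtain ⟨u, hu, rfl⟩ := Finset.mem_image.1 ha
        obtain ⟨v, hv, rfl⟩ := Finset.mem_image.1 hb
        refine Finset.mem_mul.2 ⟨_, ?_, _, ?_, hab⟩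
        · exact Finset.mem_biUnion.2 ⟨p.1, Finset.mem_univ _,
            Finset.mem_image_of_mem _ hu⟩
        · exact Finset.mem_biUnion.2 ⟨p.2, Finset.mem_univ _,
            Finset.mem_image_of_mem _ hv⟩
  -- 1 ∉ D
  have h1D : (1 : FreeGroup (Fin n × Fin 3)) ∉ D := by
    rw [hD]
    intro h
    obtain ⟨i, -, h2⟩ := Finset.mem_biUnion.1 h
    obtain ⟨c, hc, hc1⟩ := Finset.mem_image.1 h2
    have : c = 1 := by
      have := congrArg (ψ n i) hc1
      simpa [psi_iota_self] using this
    exact (Finset.mem_erase.1 hc).1 this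
  -- O disjoint from {1} ∪ D
  have hOD : ∀ {w}, w ∈ O → w ∉ ({1} ∪ D : Finset (FreeGroup (Fin n × Fin 3))) := by
    intro w hwO hw1D
    rw [hO] at hwO
    obtain ⟨p, hp, hwp⟩ := Finset.mem_biUnion.1 hwO
    obtain ⟨i, j, rfl⟩ : ∃ i j : Fin n, p = (i, j) := ⟨p.1, p.2, rfl⟩
    have hij : i ≠ j := (Finset.mem_offDiag.1 hp).2.2
    obtain ⟨a, ha, b, hb, hab⟩ := Finset.mem_mul.1 hwp
    obtain ⟨u, hu, rfl⟩ := Finset.mem_image.1 ha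
    obtain ⟨v, hv, rfl⟩ := Finset.mem_image.1 hb
    have hpsii : ψ n i w = u := by
      rw [← hab, psi_mul, if_pos rfl, if_neg hij.symm, mul_one]
    have hpsij : ψ n j w = v := by
      rw [← hab, psi_mul, if_neg hij, if_pos rfl, one_mul]
    rcases Finset.mem_union.1 hw1D with hw | hw
    · have hw1 : w = 1 := by simpa using hw
      rw [hw1, _root_.map_one] at hpsii
      exact hneU hu hpsii.symm
    · rw [hD] at hw
      obtain ⟨k, -, hw2⟩ := Finset.mem_biUnion.1 hw
      obtain ⟨c, hc, hck⟩ := Finset.mem_image.1 hw2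
      by_cases hik : i = k
      · subst hik
        have : ψ n j w = 1 := by rw [← hck]; exact psi_iota_ne hij c
        rw [hpsij] at this
        exact hneV hv this
      · have : ψ n i w = 1 := by rw [← hck]; exact psi_iota_ne (Ne.symm hik) c
        rw [hpsii] at this
        exact hneU hu this
  -- card D
  have hcardD : D.card = n * ((U * V).card - 1) := by
    rw [hD, Finset.card_biUnion]
    · have hi : ∀ i : Fin n, (T.image (ι n i)).card = T.card := fun i =>
        Finset.card_image_of_injective _ (iota_inj i)
      simp only [hi]
      rw [Finset.sum_const, Finset.card_univ, Fintype.card_fin, smul_eq_mul,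
        hT, Finset.card_erase_of_mem h1UV]
    · intro i _ j _ hijne
      rw [Function.onFun, Finset.disjoint_left]
      intro w hwi hwj
      obtain ⟨c, hc, rfl⟩ := Finset.mem_image.1 hwi
      obtain ⟨c', hc', hcc'⟩ := Finset.mem_image.1 hwj
      have : c = 1 := by
        have := congrArg (ψ n i) hcc'.symm
        rwa [psi_iota_self, psi_iota_ne hijne.symm] at this
      exact (Finset.mem_erase.1 hc).1 this
  -- card O
  have hcardO : O.card = n * (n - 1) * (U.card * V.card) := by
    rw [hO, Finset.card_biUnion]
    · have hcard1 : ∀ p ∈ (univ : Finset (Fin n)).offDiag,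
          ((U.image (ι n p.1)) * (V.image (ι n p.2))).card = U.card * V.card := by
        intro p hp
        have hij : p.1 ≠ p.2 := (Finset.mem_offDiag.1 hp).2.2
        have himg : (U.image (ι n p.1)) * (V.image (ι n p.2))
            = (U ×ˢ V).image (fun q => ι n p.1 q.1 * ι n p.2 q.2) := by
          ext w
          simp only [Finset.mem_mul, Finset.mem_image, Finset.mem_product]
          constructor
          · rintro ⟨a, ⟨u, hu, rfl⟩, b, ⟨v, hv, rfl⟩, hab⟩
            exact ⟨(u, v), ⟨hu, hv⟩, hab⟩
          · rintro ⟨⟨u, v⟩, ⟨hu, hv⟩, hw⟩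
            exact ⟨_, ⟨u, hu, rfl⟩, _, ⟨v, hv, rfl⟩, hw⟩
        rw [himg, Finset.card_image_of_injOn, Finset.card_product]
        rintro ⟨u, v⟩ huv ⟨u', v'⟩ huv' h
        simp only at h
        have h1 := congrArg (ψ n p.1) h
        have h2 := congrArg (ψ n p.2) h
        rw [psi_mul, psi_mul, if_pos rfl, if_pos rfl, if_neg hij.symm,
          if_neg hij.symm, mul_one, mul_one] at h1
        rw [psi_mul, psi_mul, if_neg hij, if_neg hij, if_pos rfl,
          if_pos rfl, one_mul, one_mul] at h2
        exact Prod.ext h1 h2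
      rw [Finset.sum_congr rfl hcard1, Finset.sum_const, smul_eq_mul,
        Finset.offDiag_card, Finset.card_univ, Fintype.card_fin]
      congr 1
      cases n with
      | zero => simp
      | succ k => simp [Nat.succ_sub_one, Nat.mul_succ]
    · rintro ⟨i, j⟩ hp ⟨k, l⟩ hq hpq
      have hij : i ≠ j := (Finset.mem_offDiag.1 hp).2.2
      have hkl : k ≠ l := (Finset.mem_offDiag.1 hq).2.2
      rw [Function.onFun, Finset.disjoint_left]
      intro w hw1 hw2
      obtain ⟨a, ha, b, hb, hab⟩ := Finset.mem_mul.1 hw1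
      obtain ⟨u, hu, rfl⟩ := Finset.mem_image.1 ha
      obtain ⟨v, hv, rfl⟩ := Finset.mem_image.1 hb
      obtain ⟨a', ha', b', hb', hab'⟩ := Finset.mem_mul.1 hw2
      obtain ⟨u', hu', rfl⟩ := Finset.mem_image.1 ha'
      obtain ⟨v', hv', rfl⟩ := Finset.mem_image.1 hb'
      have key : ∀ m : Fin n,
          (if i = m then u else 1) * (if j = m then v else 1)
            = (if k = m then u' else 1) * (if l = m then v' else 1) := by
        intro m
        have := congrArg (ψ n m) (hab.trans hab'.symm)
        rwa [psi_mul, psi_mul] at this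
      have hki := key i
      rw [if_pos rfl, if_neg hij.symm, mul_one] at hki
      by_cases hik : k = i
      · subst hik
        rw [if_pos rfl, if_neg (Ne.symm hkl), mul_one] at hki
        have hkj := key j
        rw [if_neg hij, if_pos rfl, one_mul, if_neg hij, one_mul] at hkj
        by_cases hlj : l = j
        · subst hlj
          exact hpq rfl
        · rw [if_neg hlj] at hkj
          exact hneV hv hkj
      · rw [if_neg hik] at hki
        by_cases hli : l = i
        · rw [if_pos hli, one_mul] at hki
          exact (Finset.disjoint_left.1 hd hu) (by rw [hki]; exact hv')
        · rw [if_neg hli, mul_one] at hki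
          exact hneU hu hki
  -- assemble
  rw [hEq, Finset.card_union_of_disjoint, Finset.card_union_of_disjoint]
  · rw [hcardD, hcardO]; simp
  · exact Finset.disjoint_singleton_left.2 h1D
  · rw [Finset.disjoint_right]
    intro w hwO hw
    exact hOD hwO hw

lemma biUnion_inv {β : Type*} [Group β] [DecidableEq β]
    (s : Finset (Fin n)) (t : Fin n → Finset β) :
    (s.biUnion t)⁻¹ = s.biUnion fun i => (t i)⁻¹ := by
  ext w
  simp only [Finset.mem_inv, Finset.mem_biUnion]
  constructor
  · rintro ⟨b, ⟨i, hi, hb⟩, rfl⟩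
    exact ⟨i, hi, b, hb, rfl⟩
  · rintro ⟨i, hi, b, hb, rfl⟩
    exact ⟨b, ⟨i, hi, hb⟩, rfl⟩

end Stmt5Aux

open Stmt5Aux

/-- For `n ≥ 1`, in the free group on `3n` generators `x_i, y_i, z_i` (`1 ≤ i ≤ n`),
the set `A_n = ⋃_i {x_i, y_i⁻¹, y_i⁻¹x_i⁻¹y_i⁻¹, x_i z_i, y_i⁻¹ z_i}` satisfies
`|A_n A_n⁻¹| - |A_n⁻¹ A_n| = 2n`. Here the free group on `3n` generators is realized as
`FreeGroup (Fin n × Fin 3)`, with `x_i = of (i, 0)`, `y_i = of (i, 1)`, `z_i = of (i, 2)`. -/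
theorem stmt_5 (n : ℕ) (hn : 1 ≤ n)
    (x y z : Fin n → FreeGroup (Fin n × Fin 3))
    (hx : ∀ i, x i = FreeGroup.of (i, 0))
    (hy : ∀ i, y i = FreeGroup.of (i, 1))
    (hz : ∀ i, z i = FreeGroup.of (i, 2))
    (A : Finset (FreeGroup (Fin n × Fin 3)))
    (hA : A = Finset.univ.biUnion
      (fun i : Fin n =>
        {x i, (y i)⁻¹, (y i)⁻¹ * (x i)⁻¹ * (y i)⁻¹, x i * z i, (y i)⁻¹ * z i})) :
    ((A * A⁻¹).card : ℤ) - ((A⁻¹ * A).card : ℤ) = 2 * n := by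
  classical
  have hA' : A = Finset.univ.biUnion fun i : Fin n => S.image (ι n i) := by
    rw [hA]
    refine Finset.biUnion_congr rfl fun i _ => ?_
    simp [S, ι, Finset.image_insert, FreeGroup.map.of, hx, hy, hz]
  have hAinv : A⁻¹ = Finset.univ.biUnion fun i : Fin n => (S⁻¹).image (ι n i) := by
    rw [hA', biUnion_inv]
    refine Finset.biUnion_congr rfl fun i _ => ?_
    exact (Finset.image_inv (ι n i) S).symm
  have h1 : (1 : FreeGroup (Fin 3)) ∉ S := by decide
  have h2 : (1 : FreeGroup (Fin 3)) ∉ S⁻¹ := by decide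
  have h3 : Disjoint S S⁻¹ := by decide
  have h3' : Disjoint (S⁻¹ : Finset (FreeGroup (Fin 3))) S := h3.symm
  have h4 : (1 : FreeGroup (Fin 3)) ∈ S * S⁻¹ := by decide
  have h5 : (1 : FreeGroup (Fin 3)) ∈ S⁻¹ * S := by decide
  have hk : (S * S⁻¹).card = 17 := by decide
  have hk' : (S⁻¹ * S).card = 15 := by decide
  have hS5 : S.card = 5 := by decide
  have hS5' : (S⁻¹ : Finset (FreeGroup (Fin 3))).card = 5 := by decide
  have e1 := card_prod (n := n) hn S S⁻¹ h1 h2 h3 h4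
  have e2 := card_prod (n := n) hn S⁻¹ S h2 h1 h3' h5
  rw [hk, hS5, hS5'] at e1
  rw [hk', hS5, hS5'] at e2
  rw [hAinv, hA', e1, e2]
  have hn1 : (1 : ℕ) ≤ n := hn
  push_cast [Nat.cast_sub hn1]
  ring
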